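/- Let (ψ, F, Q, Q₂, Q₂₂) be a solution on [0, T] of the backward ODE system (for some terminal value w ∈ ℝ) with F(t) > 0 for all t ∈ [0, T]. Then the function G(t) := (I/a)·log F(t) + I·Q(t) + L·Q₂(t) + (1/2)·Q₂₂(t)·ψ(t) satisfies G'(t) = G(t)/F(t) on [0, T] and G(T) = 0; consequently G(t) = 0 for all t ∈ [0, T], i.e., the market-clearing identity 0 = (I/a)·log F(t) + I·Q(t) + L·Q₂(t) + (1/2)·Q₂₂(t)·ψ(t) holds for all t ∈ [0, T]. -/

import Mathlib

open Set

/-- The backward ODE system of Lemma 1 on `[0,T]` with terminal value `w` for `ψ`. -/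
def BwdSol (I : ℕ) (L μD μY ρ δ σY T a σD α w : ℝ)
    (ψ F Q Q2 Q22 : ℝ → ℝ) : Prop :=
  ψ T = w ∧ F T = 1 ∧ Q T = 0 ∧ Q2 T = 0 ∧ Q22 T = 0 ∧
    ∀ t ∈ Set.Icc 0 T,
      HasDerivWithinAt ψ (2 * F t * Q22 t / α * (ψ t - L ^ 2 / (I : ℝ))) (Set.Icc 0 T) t ∧
      HasDerivWithinAt F
        (F t * (δ - a ^ 2 * σD ^ 2 / (2 * (I : ℝ)) * ψ t -
          a * (a * (I : ℝ) * σY ^ 2 + 2 * a * L * ρ * σD * σY - 2 * (I : ℝ) * μY - 2 * L * μD) /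
            (2 * (I : ℝ))) - 1) (Set.Icc 0 T) t ∧
      HasDerivWithinAt Q
        (-(δ / a) + (a * Q t - Real.log (1 / F t) + 1) / (a * F t) + a * σY ^ 2 / 2 -
          L ^ 2 * F t * Q22 t ^ 2 / (α * (I : ℝ) ^ 2) - μY) (Set.Icc 0 T) t ∧
      HasDerivWithinAt Q2
        (a * ρ * σD * σY + 2 * L * F t * Q22 t ^ 2 / (α * (I : ℝ)) + Q2 t / F t - μD)
        (Set.Icc 0 T) t ∧
      HasDerivWithinAt Q22 (a * σD ^ 2 - 2 * F t * Q22 t ^ 2 / α + Q22 t / F t) (Set.Icc 0 T) t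

/-- market clearing.  If `(ψ,F,Q,Q₂,Q₂₂)` solves the backward ODE system on
`[0,T]` (for some terminal value `w`) with `F > 0`, then
`G(t) = (I/a)·log F(t) + I·Q(t) + L·Q₂(t) + ½·Q₂₂(t)·ψ(t)` satisfies `G' = G/F`, `G(T) = 0`,
and hence `G ≡ 0` on `[0,T]`. -/
theorem stmt19 (I : ℕ) (hI : 1 ≤ I) (L μD μY ρ δ σY T a σD α : ℝ)
    (hρ : ρ ∈ Set.Icc (-1 : ℝ) 1) (hδ : 0 ≤ δ) (hσY : 0 ≤ σY)
    (hT : 0 < T) (ha : 0 < a) (hσD : 0 < σD) (hα : 0 < α)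
    (w : ℝ) (ψ F Q Q2 Q22 : ℝ → ℝ)
    (hsol : BwdSol I L μD μY ρ δ σY T a σD α w ψ F Q Q2 Q22)
    (hFpos : ∀ t ∈ Set.Icc (0 : ℝ) T, 0 < F t)
    (G : ℝ → ℝ)
    (hG : ∀ t, G t = (I : ℝ) / a * Real.log (F t) + (I : ℝ) * Q t + L * Q2 t +
      1 / 2 * Q22 t * ψ t) :
    (∀ t ∈ Set.Icc (0 : ℝ) T, HasDerivWithinAt G (G t / F t) (Set.Icc 0 T) t) ∧
    G T = 0 ∧
    ∀ t ∈ Set.Icc (0 : ℝ) T, G t = 0 := by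
  obtain ⟨hψT, hFT, hQT, hQ2T, hQ22T, hODE⟩ := hsol
  have hGe : G = fun t => (I : ℝ) / a * Real.log (F t) + (I : ℝ) * Q t + L * Q2 t +
      1 / 2 * Q22 t * ψ t := funext hG
  have hIne : ((I : ℝ)) ≠ 0 := by positivity
  have hane : a ≠ 0 := ne_of_gt ha
  have hαne : α ≠ 0 := ne_of_gt hα
  -- derivative identity
  have hderiv : ∀ t ∈ Set.Icc (0 : ℝ) T, HasDerivWithinAt G (G t / F t) (Set.Icc 0 T) t := by
    intro t ht
    obtain ⟨hψ', hF', hQ', hQ2', hQ22'⟩ := hODE t ht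
    have hFt : 0 < F t := hFpos t ht
    have hFne : F t ≠ 0 := ne_of_gt hFt
    have h := ((((hF'.log hFne).const_mul ((I : ℝ) / a)).add (hQ'.const_mul (I : ℝ))).add
        (hQ2'.const_mul L)).add ((hQ22'.const_mul (1 / 2 : ℝ)).mul hψ')
    rw [hGe]
    convert h using 1
    rfl
    rfl
    rfl
    have hlog : Real.log (1 / F t) = -Real.log (F t) := by
      rw [one_div, Real.log_inv]
    rw [hlog]
    field_simp
    ring
  refine ⟨hderiv, ?_, ?_⟩
  · rw [hG T, hFT, hQT, hQ2T, hQ22T, Real.log_one]; ring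
  have hGT : G T = 0 := by
    rw [hG T, hFT, hQT, hQ2T, hQ22T, Real.log_one]; ring
  -- F has a positive lower bound on [0,T]
  have hFc : ContinuousOn F (Set.Icc 0 T) := fun t ht =>
    (hODE t ht).2.1.continuousWithinAt
  obtain ⟨t₀, ht₀, hmin'⟩ := isCompact_Icc.exists_isMinOn (nonempty_Icc.2 hT.le) hFc
  have hmin : ∀ x ∈ Set.Icc (0:ℝ) T, F t₀ ≤ F x := fun x hx => hmin' hx
  set m := F t₀ with hm
  have hmpos : 0 < m := hFpos t₀ ht₀
  set K := 1 / m with hK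
  -- reversed function
  set g : ℝ → ℝ := fun s => G (T - s) with hg
  have hmem : ∀ s ∈ Set.Icc (0 : ℝ) T, T - s ∈ Set.Icc (0 : ℝ) T := by
    intro s hs
    exact ⟨by linarith [hs.2], by linarith [hs.1]⟩
  have hgderiv : ∀ s ∈ Set.Icc (0 : ℝ) T,
      HasDerivWithinAt g (-(G (T - s) / F (T - s))) (Set.Icc 0 T) s := by
    intro s hs
    have hmap : Set.MapsTo (fun s : ℝ => T - s) (Set.Icc 0 T) (Set.Icc 0 T) :=
      fun s hs => hmem s hs
    have hf : HasDerivWithinAt (fun s : ℝ => T - s) (-1) (Set.Icc 0 T) s :=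
      ((hasDerivAt_id s).const_sub T).hasDerivWithinAt
    have := (hderiv (T - s) (hmem s hs)).comp s hf hmap
    rw [mul_neg_one] at this
    exact this
  have hgc : ContinuousOn g (Set.Icc 0 T) := by
    intro s hs
    exact ((hgderiv s hs).continuousWithinAt)
  have hbound : ∀ s ∈ Set.Ico (0 : ℝ) T,
      ‖-(G (T - s) / F (T - s))‖ ≤ K * ‖g s‖ + 0 := by
    intro s hs
    have hs' : s ∈ Set.Icc (0 : ℝ) T := ⟨hs.1, hs.2.le⟩
    have hmem' := hmem s hs'
    have hFt : 0 < F (T - s) := hFpos _ hmem'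
    have hmle : m ≤ F (T - s) := hmin _ hmem'
    have : ‖-(G (T - s) / F (T - s))‖ = ‖G (T - s)‖ / F (T - s) := by
      rw [norm_neg, norm_div, Real.norm_of_nonneg hFt.le]
    rw [this, add_zero]
    have : ‖G (T - s)‖ / F (T - s) ≤ ‖G (T - s)‖ / m :=
      div_le_div_of_nonneg_left (norm_nonneg _) hmpos hmle
    calc ‖G (T - s)‖ / F (T - s) ≤ ‖G (T - s)‖ / m := this
      _ = K * ‖g s‖ := by rw [hK, hg]; ring
  have hgz : ∀ s ∈ Set.Icc (0 : ℝ) T, ‖g s‖ ≤ gronwallBound 0 K 0 (s - 0) := by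
    apply norm_le_gronwallBound_of_norm_deriv_right_le hgc
    · intro s hs
      exact (hgderiv s ⟨hs.1, hs.2.le⟩).mono_of_mem_nhdsWithin (Icc_mem_nhdsGE_of_mem hs)
    · simp [hg, hGT]
    · exact hbound
  intro t ht
  have hs' : T - t ∈ Set.Icc (0 : ℝ) T := ⟨by linarith [ht.2], by linarith [ht.1]⟩
  have := hgz (T - t) hs'
  rw [gronwallBound_ε0_δ0] at this
  have : ‖G t‖ ≤ 0 := by simpa [hg, sub_sub_cancel] using this
  simpa using le_antisymm this (norm_nonneg _)
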